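/- Let 0 < ε < 1 and let φ* ∈ (0, π/2) satisfy φ*·tan φ* = (1/2)|log ε|. Then as ε → 0⁺, 2·sin φ* = 2 - π²/(log ε)² + o(1/(log ε)²). -/

import Mathlib

open Real Set Filter Asymptotics
open scoped Topology

theorem speed_asymptotics_eps_to_zero (φ : ℝ → ℝ)
    (hφ : ∀ ε : ℝ, 0 < ε → ε < 1 →
      φ ε ∈ Ioo 0 (π / 2) ∧ φ ε * Real.tan (φ ε) = (1 / 2) * |Real.log ε|) :
    (fun ε : ℝ => 2 * Real.sin (φ ε) - (2 - π ^ 2 / (Real.log ε) ^ 2))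
      =o[nhdsWithin 0 (Ioo 0 1)] (fun ε : ℝ => 1 / (Real.log ε) ^ 2) := by
  set l : Filter ℝ := nhdsWithin 0 (Ioo 0 1) with hl
  have hmem : ∀ᶠ ε in l, ε ∈ Ioo (0:ℝ) 1 := eventually_mem_nhdsWithin
  have hπ := Real.pi_pos
  have hlog : Tendsto Real.log l atBot :=
    Real.tendsto_log_nhdsGT_zero.mono_left
      (nhdsWithin_mono _ (fun x hx => hx.1))
  have hneglog : Tendsto (fun ε => -Real.log ε) l atTop := tendsto_neg_atTop_iff.mpr hlog
  -- key pointwise identity: -log ε = 2 φ cos s / sin s with s = π/2 - φ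
  have key : ∀ ε ∈ Ioo (0:ℝ) 1,
      -Real.log ε = 2 * φ ε * Real.cos (π/2 - φ ε) / Real.sin (π/2 - φ ε) := by
    intro ε hε
    obtain ⟨⟨hp0, hp1⟩, heq⟩ := hφ ε hε.1 hε.2
    have hs0 : 0 < π/2 - φ ε := by linarith
    have hsin : Real.sin (π/2 - φ ε) > 0 :=
      Real.sin_pos_of_pos_of_lt_pi hs0 (by linarith)
    have hcosφ : Real.cos (φ ε) = Real.sin (π/2 - φ ε) := (Real.sin_pi_div_two_sub _).symm
    have hsinφ : Real.sin (φ ε) = Real.cos (π/2 - φ ε) := (Real.cos_pi_div_two_sub _).symm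
    have habs : |Real.log ε| = -Real.log ε := abs_of_neg (Real.log_neg hε.1 hε.2)
    rw [Real.tan_eq_sin_div_cos, hsinφ, hcosφ, habs] at heq
    calc -Real.log ε
        = 2 * (φ ε * (Real.cos (π/2 - φ ε) / Real.sin (π/2 - φ ε))) := by
          rw [← mul_div_assoc] at heq; rw [← mul_div_assoc]; linarith
      _ = 2 * φ ε * Real.cos (π/2 - φ ε) / Real.sin (π/2 - φ ε) := by ring
  -- s = π/2 - φ tends to 0
  have hsle : ∀ᶠ ε in l, π/2 - φ ε ≤ π^2/2 * (1 / (-Real.log ε)) := by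
    filter_upwards [hmem, hneglog.eventually_gt_atTop 0] with ε hε hL
    obtain ⟨⟨hp0, hp1⟩, _⟩ := hφ ε hε.1 hε.2
    have hs0 : 0 < π/2 - φ ε := by linarith
    have hsin : Real.sin (π/2 - φ ε) > 0 :=
      Real.sin_pos_of_pos_of_lt_pi hs0 (by linarith)
    have hk := key ε hε
    have hbound : Real.sin (π/2 - φ ε) * (-Real.log ε) ≤ π := by
      rw [hk, mul_comm, div_mul_cancel₀ _ (ne_of_gt hsin)]
      have hc1 : Real.cos (π/2 - φ ε) ≤ 1 := Real.cos_le_one _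
      have hc0 : 0 ≤ Real.cos (π/2 - φ ε) :=
        Real.cos_nonneg_of_mem_Icc ⟨by linarith, by linarith⟩
      nlinarith
    have hjordan : 2/π * (π/2 - φ ε) ≤ Real.sin (π/2 - φ ε) :=
      Real.mul_le_sin (le_of_lt hs0) (by linarith)
    have hj2 : 2 * (π/2 - φ ε) ≤ π * Real.sin (π/2 - φ ε) := by
      rw [div_mul_eq_mul_div, div_le_iff₀ hπ] at hjordan
      linarith
    rw [mul_one_div, le_div_iff₀ hL]
    nlinarith [mul_le_mul_of_nonneg_right hj2 hL.le,
      mul_le_mul_of_nonneg_left hbound hπ.le]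
  have hsge : ∀ᶠ ε in l, (0:ℝ) ≤ π/2 - φ ε := by
    filter_upwards [hmem] with ε hε
    obtain ⟨⟨hp0, hp1⟩, _⟩ := hφ ε hε.1 hε.2
    linarith
  have hupper : Tendsto (fun ε => π^2/2 * (1 / (-Real.log ε))) l (𝓝 0) := by
    have := (tendsto_const_nhds (x := π^2/2) (f := l)).mul hneglog.inv_tendsto_atTop
    simpa [one_div] using this
  have hstend : Tendsto (fun ε => π/2 - φ ε) l (𝓝 0) :=
    tendsto_of_tendsto_of_tendsto_of_le_of_le' tendsto_const_nhds hupper hsge hsle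
  have hφtend : Tendsto φ l (𝓝 (π/2)) := by
    have := (tendsto_const_nhds (x := π/2) (f := l)).sub hstend
    simpa using this
  set g : ℝ → ℝ := fun ε => 2 * φ ε * Real.cos (π/2 - φ ε) / Real.cos ((π/2 - φ ε)/2)
    with hg
  have hcos_s : Tendsto (fun ε => Real.cos (π/2 - φ ε)) l (𝓝 1) := by
    have := (Real.continuous_cos.tendsto 0).comp hstend
    simpa [Function.comp_def] using this
  have hcos_s2 : Tendsto (fun ε => Real.cos ((π/2 - φ ε)/2)) l (𝓝 1) := by
    have h2 : Tendsto (fun ε => (π/2 - φ ε)/2) l (𝓝 0) := by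
      simpa using hstend.div_const 2
    have := (Real.continuous_cos.tendsto 0).comp h2
    simpa [Function.comp_def] using this
  have hgtend : Tendsto g l (𝓝 π) := by
    have hnum : Tendsto (fun ε => 2 * φ ε * Real.cos (π/2 - φ ε)) l (𝓝 (2 * (π/2) * 1)) :=
      (tendsto_const_nhds.mul hφtend).mul hcos_s
    have h := hnum.div hcos_s2 one_ne_zero
    rw [show (2 * (π/2) * 1 / 1 : ℝ) = π by ring] at h
    exact h
  have hg2 : Tendsto (fun ε => -(g ε)^2 + π^2) l (𝓝 0) := by
    have := ((hgtend.pow 2).neg).add_const (π^2)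
    simpa using this
  -- pointwise identity for the scaled difference
  have hid : ∀ ε ∈ Ioo (0:ℝ) 1,
      (2 * Real.sin (φ ε) - 2) * (Real.log ε)^2 = -(g ε)^2 := by
    intro ε hε
    obtain ⟨⟨hp0, hp1⟩, _⟩ := hφ ε hε.1 hε.2
    have hk := key ε hε
    simp only [hg]
    set s := π/2 - φ ε with hsdef
    clear_value s
    have hs0 : 0 < s := by rw [hsdef]; linarith
    have hs1 : s < π/2 := by rw [hsdef]; linarith
    have hsinφ : Real.sin (φ ε) = Real.cos s := by
      rw [hsdef]; exact (Real.cos_pi_div_two_sub _).symm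
    have hsin2 : 0 < Real.sin (s/2) :=
      Real.sin_pos_of_pos_of_lt_pi (by linarith) (by linarith)
    have hcos2 : 0 < Real.cos (s/2) :=
      Real.cos_pos_of_mem_Ioo ⟨by linarith, by linarith⟩
    have hsin : 0 < Real.sin s := Real.sin_pos_of_pos_of_lt_pi hs0 (by linarith)
    have hsin_eq : Real.sin s = 2 * Real.sin (s/2) * Real.cos (s/2) := by
      have := Real.sin_two_mul (s/2)
      rw [show 2 * (s/2) = s by ring] at this
      exact this
    have hcos_eq : Real.cos s = 2 * Real.cos (s/2)^2 - 1 := by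
      have := Real.cos_two_mul (s/2)
      rw [show 2 * (s/2) = s by ring] at this
      exact this
    have hpyth : Real.sin (s/2)^2 + Real.cos (s/2)^2 = 1 := Real.sin_sq_add_cos_sq _
    have h2c : 2 * Real.cos s - 2 = -4 * Real.sin (s/2)^2 := by
      rw [hcos_eq]; linarith
    have hlogeq : Real.log ε = -(2 * φ ε * Real.cos s / Real.sin s) := by
      rw [← hk]; ring
    rw [hsinφ, hlogeq, h2c, hsin_eq]
    field_simp
    ring
  -- conclude
  rw [isLittleO_iff_tendsto']
  · have heq : ∀ᶠ ε in l,
        (2 * Real.sin (φ ε) - (2 - π ^ 2 / (Real.log ε) ^ 2)) / (1 / (Real.log ε) ^ 2)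
          = -(g ε)^2 + π^2 := by
      filter_upwards [hmem] with ε hε
      have hlogne : Real.log ε ≠ 0 := ne_of_lt (Real.log_neg hε.1 hε.2)
      rw [← hid ε hε]
      field_simp
      ring
    exact (tendsto_congr' heq).mpr hg2
  · filter_upwards [hmem] with ε hε h
    have hlogne : Real.log ε ≠ 0 := ne_of_lt (Real.log_neg hε.1 hε.2)
    exact absurd h (by positivity)
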